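/- Let T be a low-defect tree, and define its complexity ‖T‖ as the least ‖E‖ over all low-defect expressions E with T(E) isomorphic to T. Then ‖T‖ = Σ_{e an edge of T} ‖w(e)‖ + Σ_{v a leaf of T} ‖w(v)‖ + Σ_{v a non-leaf vertex of T with w(v) > 1} ‖w(v)‖, where w denotes the label of the given vertex or edge. -/

import Mathlib

/-- `CpxW n k` : the positive integer `n` can be written using exactly `k` ones,
with an arbitrary combination of additions and multiplications. -/
inductive CpxW : ℕ → ℕ → Prop
  | one : CpxW 1 1
  | add {a b m n : ℕ} : CpxW a m → CpxW b n → CpxW (a + b) (m + n)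
  | mul {a b m n : ℕ} : CpxW a m → CpxW b n → CpxW (a * b) (m + n)

/-- The integer complexity `‖n‖`. -/
noncomputable def cpx (n : ℕ) : ℕ := sInf {k | CpxW n k}

/-- Low-defect expressions: built from positive integer constants (rule `const`,
positivity recorded in `LDE.WF`), products (rule `mul`, disjointness of the
variables recorded in `LDE.WF`) and `E·x + c` (rule `step`, freshness of `x`
recorded in `LDE.WF`).  Variables are indexed by natural numbers. -/
inductive LDE : Type
  | const (n : ℕ) : LDE
  | mul (E₁ E₂ : LDE) : LDE
  | step (E : LDE) (x : ℕ) (c : ℕ) : LDE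

/-- The set of variables used by a low-defect expression. -/
def LDE.vars : LDE → Finset ℕ
  | .const _ => ∅
  | .mul E₁ E₂ => E₁.vars ∪ E₂.vars
  | .step E x _ => insert x E.vars

/-- Well-formedness of a low-defect expression: constants are positive, the two
factors of a product use disjoint sets of variables, and the variable of
`E·x + c` does not occur in `E`. -/
def LDE.WF : LDE → Prop
  | .const n => 0 < n
  | .mul E₁ E₂ => E₁.WF ∧ E₂.WF ∧ Disjoint E₁.vars E₂.vars
  | .step E x c => E.WF ∧ x ∉ E.vars ∧ 0 < c

/-- The polynomial obtained by evaluating a low-defect expression. -/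
noncomputable def LDE.poly : LDE → MvPolynomial ℕ ℤ
  | .const n => MvPolynomial.C (n : ℤ)
  | .mul E₁ E₂ => E₁.poly * E₂.poly
  | .step E x c => E.poly * MvPolynomial.X x + MvPolynomial.C (c : ℤ)

/-- The complexity `‖E‖` of a low-defect expression. -/
noncomputable def LDE.cpx : LDE → ℕ
  | .const n => _root_.cpx n
  | .mul E₁ E₂ => E₁.cpx + E₂.cpx
  | .step E _ c => E.cpx + _root_.cpx c

/-- Low-defect trees: rooted trees whose vertices and edges are labeled by
natural numbers (positivity of the labels is recorded in `LDT.Pos`); a node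
carries its label together with the list of its subtrees, each with the label of
the corresponding edge. -/
inductive LDT : Type
  | node (label : ℕ) (children : List (ℕ × LDT)) : LDT

/-- The label of the root. -/
def LDT.label : LDT → ℕ | .node n _ => n

/-- The children (edge label, subtree) of the root. -/
def LDT.children : LDT → List (ℕ × LDT) | .node _ cs => cs

mutual
/-- All labels of a low-defect tree are positive. -/
def LDT.Pos : LDT → Prop
  | .node n cs => 0 < n ∧ LDT.PosAux cs

def LDT.PosAux : List (ℕ × LDT) → Prop
  | [] => True
  | c :: cs => 0 < c.1 ∧ c.2.Pos ∧ LDT.PosAux cs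
end

/-- Isomorphism of labeled rooted trees: a root-preserving, label-preserving
graph isomorphism; concretely, the root labels agree and the children lists
match up to a permutation, recursively. -/
inductive LDT.Iso : LDT → LDT → Prop
  | node (n : ℕ) (cs₁ cs₂ : List (ℕ × LDT)) (σ : Fin cs₁.length ≃ Fin cs₂.length)
      (hlab : ∀ i : Fin cs₁.length, (cs₁.get i).1 = (cs₂.get (σ i)).1)
      (hiso : ∀ i : Fin cs₁.length, LDT.Iso (cs₁.get i).2 (cs₂.get (σ i)).2) :
      LDT.Iso (.node n cs₁) (.node n cs₂)

/-- The low-defect tree `T(E)` associated to a low-defect expression `E`. -/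
def LDE.tree : LDE → LDT
  | .const n => .node n []
  | .step E _ c => .node 1 [(c, E.tree)]
  | .mul E₁ E₂ => .node (E₁.tree.label * E₂.tree.label) (E₁.tree.children ++ E₂.tree.children)

/-- The subtree of a low-defect tree at a position (a path from the root, given
by the list of child indices); `none` if there is no such vertex. -/
def LDT.sub? : LDT → List ℕ → Option LDT
  | t, [] => some t
  | t, i :: p =>
    match t.children[i]? with
    | some c => LDT.sub? c.2 p
    | none => none

/-- `p` is a vertex of `t` (vertices are encoded by their positions). -/
def LDT.IsVert (t : LDT) (p : List ℕ) : Prop := (t.sub? p).isSome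

/-- The label of the vertex at position `p` (junk value `1` if `p` is not a
vertex). -/
def LDT.labelAt (t : LDT) (p : List ℕ) : ℕ := ((t.sub? p).map LDT.label).getD 1

/-- The list of children at position `p`. -/
def LDT.childrenAt (t : LDT) (p : List ℕ) : List (ℕ × LDT) :=
  ((t.sub? p).map LDT.children).getD []

/-- The label of the edge joining the non-root vertex at position `q` to its
parent (junk value `1` if there is no such edge). -/
def LDT.edgeLabelAt (t : LDT) (q : List ℕ) : ℕ :=
  (((t.sub? q.dropLast).bind (fun s => s.children[q.getLast?.getD 0]?)).map
    Prod.fst).getD 1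

mutual
/-- The list of all positions (vertices) of a low-defect tree. -/
def LDT.positions : LDT → List (List ℕ)
  | .node _ cs => [] :: LDT.positionsAux 0 cs

def LDT.positionsAux : ℕ → List (ℕ × LDT) → List (List ℕ)
  | _, [] => []
  | i, c :: cs => (c.2.positions.map (i :: ·)) ++ LDT.positionsAux (i + 1) cs
end

/-- The finite set of vertices (positions) of a low-defect tree. -/
def LDT.vertFinset (t : LDT) : Finset (List ℕ) := t.positions.toFinset

/-- The finite set of edges of a low-defect tree, an edge being encoded by the
position of its lower (non-root) endpoint. -/
def LDT.edgeFinset (t : LDT) : Finset (List ℕ) := t.positions.toFinset.erase []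

/-- The variable of `E` corresponding to the non-root vertex of `T(E)` at a given
position, under the canonical bijection between variables of `E` and non-root
vertices of `T(E)`. -/
def LDE.varAt : LDE → List ℕ → Option ℕ
  | .const _, _ => none
  | .step E x _, p =>
    match p with
    | 0 :: p' => if p' = [] then some x else E.varAt p'
    | _ => none
  | .mul E₁ E₂, p =>
    match p with
    | i :: p' =>
      if i < E₁.tree.children.length then E₁.varAt (i :: p')
      else E₂.varAt ((i - E₁.tree.children.length) :: p')
    | [] => none

/-- The position of the non-root vertex of `T(E)` corresponding to a variable of
`E`, under the canonical bijection. -/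
def LDE.posOf : LDE → ℕ → Option (List ℕ)
  | .const _, _ => none
  | .step E v _, x => if x = v then some [0] else (E.posOf x).map (0 :: ·)
  | .mul E₁ E₂, x =>
    match E₁.posOf x with
    | some p => some p
    | none => (E₂.posOf x).map (fun p =>
        match p with
        | i :: p' => (i + E₁.tree.children.length) :: p'
        | [] => [])

/-- The complexity of a low-defect tree: the least complexity of a low-defect
expression whose tree is isomorphic to it. -/
noncomputable def LDT.cpx (t : LDT) : ℕ :=
  sInf {c | ∃ E : LDE, E.WF ∧ LDT.Iso E.tree t ∧ LDE.cpx E = c}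

-- basic cpx lemmas
theorem CpxW.pos_k {n k : ℕ} (h : CpxW n k) : 0 < k := by
  induction h <;> omega

theorem cpxW_exists {n : ℕ} (hn : 0 < n) : ∃ k, CpxW n k := by
  induction n with
  | zero => omega
  | succ m ih =>
    rcases Nat.eq_zero_or_pos m with hm | hm
    · subst hm; exact ⟨1, .one⟩
    · obtain ⟨k, hk⟩ := ih hm
      exact ⟨k + 1, .add hk .one⟩

theorem cpx_spec {n : ℕ} (hn : 0 < n) : CpxW n (cpx n) :=
  Nat.sInf_mem (cpxW_exists hn)

theorem cpx_le {n k : ℕ} (h : CpxW n k) : cpx n ≤ k := Nat.sInf_le h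

theorem cpx_pos {n : ℕ} (hn : 0 < n) : 0 < cpx n := (cpx_spec hn).pos_k

theorem cpx_one : cpx 1 = 1 :=
  le_antisymm (cpx_le .one) (cpx_pos one_pos)

theorem cpx_mul_le {a b : ℕ} (ha : 0 < a) (hb : 0 < b) :
    cpx (a * b) ≤ cpx a + cpx b :=
  cpx_le (.mul (cpx_spec ha) (cpx_spec hb))

-- recursive formula function
noncomputable def LDT.base (n : ℕ) (cs : List (ℕ × LDT)) : ℕ :=
  (if cs.length = 0 then _root_.cpx n else 0) + (if cs.length ≠ 0 ∧ 1 < n then _root_.cpx n else 0)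

mutual
noncomputable def LDT.fsum : LDT → ℕ
  | .node n cs => LDT.base n cs + LDT.fsumAux cs

noncomputable def LDT.fsumAux : List (ℕ × LDT) → ℕ
  | [] => 0
  | c :: cs => _root_.cpx c.1 + c.2.fsum + LDT.fsumAux cs
end

theorem LDT.fsumAux_append (cs₁ cs₂ : List (ℕ × LDT)) :
    LDT.fsumAux (cs₁ ++ cs₂) = LDT.fsumAux cs₁ + LDT.fsumAux cs₂ := by
  induction cs₁ with
  | nil => simp [LDT.fsumAux]
  | cons c cs ih => simp [LDT.fsumAux, ih]; omega
-- positions basic facts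
theorem LDT.positions_node (n : ℕ) (cs : List (ℕ × LDT)) :
    (LDT.node n cs).positions = [] :: LDT.positionsAux 0 cs := by
  rw [LDT.positions]

theorem LDT.positionsAux_cons (i : ℕ) (c : ℕ × LDT) (cs : List (ℕ × LDT)) :
    LDT.positionsAux i (c :: cs)
      = (c.2.positions.map (i :: ·)) ++ LDT.positionsAux (i + 1) cs := by
  rw [LDT.positionsAux]

theorem LDT.mem_positionsAux {p : List ℕ} :
    ∀ (cs : List (ℕ × LDT)) (i : ℕ), p ∈ LDT.positionsAux i cs →
      ∃ j q, p = j :: q ∧ i ≤ j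
  | c :: cs, i, hp => by
    rw [LDT.positionsAux_cons, List.mem_append] at hp
    rcases hp with hp | hp
    · obtain ⟨q, _, rfl⟩ := List.mem_map.1 hp
      exact ⟨i, q, rfl, le_refl i⟩
    · obtain ⟨j, q, rfl, hj⟩ := LDT.mem_positionsAux cs (i + 1) hp
      exact ⟨j, q, rfl, by omega⟩

theorem LDT.ne_nil_of_mem_positionsAux {p : List ℕ} {cs : List (ℕ × LDT)} {i : ℕ}
    (h : p ∈ LDT.positionsAux i cs) : p ≠ [] := by
  obtain ⟨j, q, rfl, -⟩ := LDT.mem_positionsAux cs i h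
  simp

mutual
theorem LDT.nodup_positions : ∀ t : LDT, t.positions.Nodup
  | .node n cs => by
    rw [LDT.positions_node, List.nodup_cons]
    exact ⟨fun h => LDT.ne_nil_of_mem_positionsAux h rfl, LDT.nodup_positionsAux 0 cs⟩

theorem LDT.nodup_positionsAux : ∀ (i : ℕ) (cs : List (ℕ × LDT)),
    (LDT.positionsAux i cs).Nodup
  | _, [] => by simp [LDT.positionsAux]
  | i, c :: cs => by
    rw [LDT.positionsAux_cons, List.nodup_append]
    refine ⟨(LDT.nodup_positions c.2).map (fun a b h => by simpa using h),
      LDT.nodup_positionsAux (i + 1) cs, ?_⟩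
    intro p hp p' hp' hpp
    obtain ⟨q, -, rfl⟩ := List.mem_map.1 hp
    obtain ⟨j, q', heq, hj⟩ := LDT.mem_positionsAux cs (i + 1) hp'
    subst hpp
    have : i = j := by injection heq
    omega
end

theorem LDT.nil_mem_positions (t : LDT) : [] ∈ t.positions := by
  cases t with
  | node n cs => rw [LDT.positions_node]; exact List.mem_cons_self
noncomputable def LDT.Gfun (t : LDT) (p : List ℕ) : ℕ :=
  (if p = [] then 0 else _root_.cpx (t.edgeLabelAt p))
  + (if (t.childrenAt p).length = 0 then _root_.cpx (t.labelAt p) else 0)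
  + (if (t.childrenAt p).length ≠ 0 ∧ 1 < t.labelAt p then _root_.cpx (t.labelAt p) else 0)

theorem LDT.children_node (n : ℕ) (cs : List (ℕ × LDT)) :
    (LDT.node n cs).children = cs := rfl

theorem LDT.sub?_cons (n : ℕ) {cs : List (ℕ × LDT)} {i : ℕ} {c : ℕ × LDT}
    (h : cs[i]? = some c) (p : List ℕ) :
    (LDT.node n cs).sub? (i :: p) = c.2.sub? p := by
  have h' : cs[i]? = some c := by exact h
  rw [LDT.sub?]
  simp [LDT.children_node, h']

theorem LDT.labelAt_cons (n : ℕ) {cs : List (ℕ × LDT)} {i : ℕ} {c : ℕ × LDT}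
    (h : cs[i]? = some c) (p : List ℕ) :
    (LDT.node n cs).labelAt (i :: p) = c.2.labelAt p := by
  rw [LDT.labelAt, LDT.labelAt, LDT.sub?_cons n h]

theorem LDT.childrenAt_cons (n : ℕ) {cs : List (ℕ × LDT)} {i : ℕ} {c : ℕ × LDT}
    (h : cs[i]? = some c) (p : List ℕ) :
    (LDT.node n cs).childrenAt (i :: p) = c.2.childrenAt p := by
  rw [LDT.childrenAt, LDT.childrenAt, LDT.sub?_cons n h]

theorem LDT.labelAt_nil (n : ℕ) (cs : List (ℕ × LDT)) :
    (LDT.node n cs).labelAt [] = n := rfl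

theorem LDT.childrenAt_nil (n : ℕ) (cs : List (ℕ × LDT)) :
    (LDT.node n cs).childrenAt [] = cs := rfl

theorem LDT.edgeLabelAt_single (n : ℕ) {cs : List (ℕ × LDT)} {i : ℕ} {c : ℕ × LDT}
    (h : cs[i]? = some c) :
    (LDT.node n cs).edgeLabelAt [i] = c.1 := by
  have h' : cs[i]? = some c := by exact h
  rw [LDT.edgeLabelAt]
  simp [LDT.sub?, LDT.children_node, h']

theorem LDT.edgeLabelAt_cons (n : ℕ) {cs : List (ℕ × LDT)} {i : ℕ} {c : ℕ × LDT}
    (h : cs[i]? = some c) {p : List ℕ} (hp : p ≠ []) :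
    (LDT.node n cs).edgeLabelAt (i :: p) = c.2.edgeLabelAt p := by
  obtain ⟨x, p', rfl⟩ : ∃ x p', p = x :: p' := by
    cases p with
    | nil => exact absurd rfl hp
    | cons x p' => exact ⟨x, p', rfl⟩
  rw [LDT.edgeLabelAt, LDT.edgeLabelAt]
  rw [List.dropLast_cons₂, LDT.sub?_cons n h, List.getLast?_cons_cons]

theorem LDT.Gfun_cons (n : ℕ) {cs : List (ℕ × LDT)} {i : ℕ} {c : ℕ × LDT}
    (h : cs[i]? = some c) (p : List ℕ) :
    (LDT.node n cs).Gfun (i :: p)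
      = (if p = [] then _root_.cpx c.1 else 0) + c.2.Gfun p := by
  rcases eq_or_ne p [] with rfl | hp
  · rw [LDT.Gfun, LDT.Gfun]
    rw [LDT.labelAt_cons n h, LDT.childrenAt_cons n h, LDT.edgeLabelAt_single n h]
    simp
    omega
  · rw [LDT.Gfun, LDT.Gfun]
    rw [LDT.labelAt_cons n h, LDT.childrenAt_cons n h, LDT.edgeLabelAt_cons n h hp]
    simp [hp]

theorem LDT.Gfun_nil (n : ℕ) (cs : List (ℕ × LDT)) :
    (LDT.node n cs).Gfun [] = LDT.base n cs := by
  rw [LDT.Gfun, LDT.base, LDT.labelAt_nil, LDT.childrenAt_nil]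
  simp
mutual
theorem LDT.sum_Gfun : ∀ t : LDT, (t.positions.map t.Gfun).sum = t.fsum
  | .node n cs => by
    rw [LDT.positions_node, List.map_cons, List.sum_cons, LDT.Gfun_nil]
    rw [LDT.fsum]
    have := LDT.sum_GfunAux cs 0 ((LDT.node n cs).Gfun)
      (fun j c p h => by simpa using LDT.Gfun_cons n h p)
    omega

theorem LDT.sum_GfunAux : ∀ (cs : List (ℕ × LDT)) (i : ℕ) (g : List ℕ → ℕ),
    (∀ (j : ℕ) (c : ℕ × LDT) (p : List ℕ), cs[j]? = some c →
      g ((i + j) :: p) = (if p = [] then _root_.cpx c.1 else 0) + c.2.Gfun p) →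
    ((LDT.positionsAux i cs).map g).sum = LDT.fsumAux cs
  | [], i, g, hg => by simp [LDT.positionsAux, LDT.fsumAux]
  | c :: cs, i, g, hg => by
    rw [LDT.positionsAux_cons, List.map_append, List.sum_append, List.map_map]
    have h2 : ((LDT.positionsAux (i + 1) cs).map g).sum = LDT.fsumAux cs :=
      LDT.sum_GfunAux cs (i + 1) g (fun j c' p h => by
        have := hg (j + 1) c' p (by simpa using h)
        have hij : i + (j + 1) = i + 1 + j := by omega
        rwa [hij] at this)
    have h1 : (c.2.positions.map (g ∘ (i :: ·))).sum = _root_.cpx c.1 + c.2.fsum := by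
      have hcong : ∀ p ∈ c.2.positions,
          (g ∘ (i :: ·)) p = (if p = [] then _root_.cpx c.1 else 0) + c.2.Gfun p :=
        fun p _ => by simpa using hg 0 c p (by simp)
      rw [List.map_congr_left hcong, ← LDT.sum_Gfun c.2]
      obtain ⟨e, t'⟩ := c
      cases t' with
      | node m cs₀ =>
        rw [LDT.positions_node, List.map_cons, List.map_cons, List.sum_cons, List.sum_cons]
        simp only [reduceIte]
        have hcong2 : ∀ p ∈ LDT.positionsAux 0 cs₀,
            (if p = [] then _root_.cpx (e, LDT.node m cs₀).1 else 0)
              + (LDT.node m cs₀).Gfun p = (LDT.node m cs₀).Gfun p :=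
          fun p hp => by rw [if_neg (LDT.ne_nil_of_mem_positionsAux hp)]; omega
        rw [List.map_congr_left hcong2]
        omega
    rw [h1, h2, LDT.fsumAux]
end
theorem LDT.rhs_eq_fsum (t : LDT) :
    (∑ q ∈ t.edgeFinset, _root_.cpx (t.edgeLabelAt q))
      + (∑ p ∈ t.vertFinset.filter (fun p => (t.childrenAt p).length = 0),
          _root_.cpx (t.labelAt p))
      + ∑ p ∈ t.vertFinset.filter
            (fun p => (t.childrenAt p).length ≠ 0 ∧ 1 < t.labelAt p),
          _root_.cpx (t.labelAt p) = t.fsum := by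
  have hE : t.edgeFinset = t.vertFinset.filter (fun q => q ≠ []) := by
    rw [LDT.edgeFinset, LDT.vertFinset, Finset.filter_ne']
  rw [hE, Finset.sum_filter, Finset.sum_filter, Finset.sum_filter,
    ← Finset.sum_add_distrib, ← Finset.sum_add_distrib]
  have : ∀ p ∈ t.vertFinset,
      ((if p ≠ [] then _root_.cpx (t.edgeLabelAt p) else 0)
        + (if (t.childrenAt p).length = 0 then _root_.cpx (t.labelAt p) else 0)
        + (if (t.childrenAt p).length ≠ 0 ∧ 1 < t.labelAt p then _root_.cpx (t.labelAt p) else 0))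
        = t.Gfun p := by
    intro p _
    rw [LDT.Gfun]
    rcases eq_or_ne p [] with rfl | hp
    · simp
    · simp [hp]
  rw [Finset.sum_congr rfl this, LDT.vertFinset,
    List.sum_toFinset _ (LDT.nodup_positions t), LDT.sum_Gfun]
theorem LDT.fsumAux_eq_map (cs : List (ℕ × LDT)) :
    LDT.fsumAux cs = (cs.map (fun c => _root_.cpx c.1 + c.2.fsum)).sum := by
  induction cs with
  | nil => simp [LDT.fsumAux]
  | cons c cs ih => rw [LDT.fsumAux, List.map_cons, List.sum_cons, ih]

theorem LDT.Iso.fsum_eq {t₁ t₂ : LDT} (h : t₁.Iso t₂) : t₁.fsum = t₂.fsum := by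
  induction h with
  | node n cs₁ cs₂ σ hlab hiso ih =>
    have hlen : cs₁.length = cs₂.length := by
      simpa using Fintype.card_congr σ
    rw [LDT.fsum, LDT.fsum, LDT.base, LDT.base, hlen]
    congr 1
    rw [LDT.fsumAux_eq_map, LDT.fsumAux_eq_map,
      ← Fin.sum_univ_fun_getElem cs₁ (fun c => _root_.cpx c.1 + c.2.fsum),
      ← Fin.sum_univ_fun_getElem cs₂ (fun c => _root_.cpx c.1 + c.2.fsum),
      ← Equiv.sum_comp σ (fun j => _root_.cpx (cs₂[(j : ℕ)]).1 + (cs₂[(j : ℕ)]).2.fsum)]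
    refine Finset.sum_congr rfl fun i _ => ?_
    have h1 := hlab i
    have h2 := ih i
    simp only [List.get_eq_getElem] at h1 h2
    rw [h1, h2]
theorem LDT.eta (t : LDT) : LDT.node t.label t.children = t := by
  cases t; rfl

theorem LDE.tree_label_pos : ∀ E : LDE, E.WF → 0 < E.tree.label
  | .const n, h => h
  | .mul E₁ E₂, h =>
    Nat.mul_pos (LDE.tree_label_pos E₁ h.1) (LDE.tree_label_pos E₂ h.2.1)
  | .step _ _ _, _ => one_pos

theorem LDT.ite_cpx_mul_le {l₁ l₂ : ℕ} (h₁ : 0 < l₁) (h₂ : 0 < l₂) :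
    (if 1 < l₁ * l₂ then _root_.cpx (l₁ * l₂) else 0)
      ≤ (if 1 < l₁ then _root_.cpx l₁ else 0) + (if 1 < l₂ then _root_.cpx l₂ else 0) := by
  by_cases g₁ : 1 < l₁ <;> by_cases g₂ : 1 < l₂
  · have : 1 < l₁ * l₂ := lt_of_lt_of_le g₁ (Nat.le_mul_of_pos_right _ h₂)
    simp only [g₁, g₂, this, if_true]
    exact cpx_mul_le h₁ h₂
  · have : l₂ = 1 := by omega
    subst this
    simp [g₁, mul_one]
  · have : l₁ = 1 := by omega
    subst this
    simp [g₂, one_mul]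
  · have : l₁ = 1 := by omega
    have : l₂ = 1 := by omega
    simp_all

theorem LDT.ite_le_base (n : ℕ) (cs : List (ℕ × LDT)) :
    (if 1 < n then _root_.cpx n else 0) ≤ LDT.base n cs := by
  rw [LDT.base]
  by_cases e : cs.length = 0 <;> by_cases g : 1 < n <;> simp [e, g]

theorem LDT.base_mul_le {l₁ l₂ : ℕ} (h₁ : 0 < l₁) (h₂ : 0 < l₂)
    (ch₁ ch₂ : List (ℕ × LDT)) :
    LDT.base (l₁ * l₂) (ch₁ ++ ch₂) ≤ LDT.base l₁ ch₁ + LDT.base l₂ ch₂ := by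
  by_cases e : (ch₁ ++ ch₂).length = 0
  · have e' := e
    rw [List.length_append] at e'
    have e₁ : ch₁.length = 0 := by omega
    have e₂ : ch₂.length = 0 := by omega
    rw [LDT.base, LDT.base, LDT.base]
    simp only [e, e₁, e₂, if_true, ne_eq, not_true_eq_false, false_and, if_false]
    have := cpx_mul_le h₁ h₂
    omega
  · have h := LDT.ite_cpx_mul_le h₁ h₂
    have b₁ := LDT.ite_le_base l₁ ch₁
    have b₂ := LDT.ite_le_base l₂ ch₂
    rw [LDT.base]
    simp only [e, if_false, ne_eq, not_false_eq_true, true_and, zero_add]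
    calc (if 1 < l₁ * l₂ then _root_.cpx (l₁ * l₂) else 0)
        ≤ _ + _ := h
      _ ≤ _ := add_le_add b₁ b₂

theorem LDE.fsum_le_cpx : ∀ E : LDE, E.WF → E.tree.fsum ≤ E.cpx
  | .const n, _ => by
    rw [LDE.tree, LDT.fsum, LDT.base, LDE.cpx, LDT.fsumAux]
    simp
  | .step E x c, h => by
    have ih := LDE.fsum_le_cpx E h.1
    rw [LDE.tree, LDT.fsum, LDT.base, LDE.cpx, LDT.fsumAux, LDT.fsumAux]
    simp only [List.length_cons, List.length_nil]
    norm_num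
    omega
  | .mul E₁ E₂, h => by
    have ih₁ := LDE.fsum_le_cpx E₁ h.1
    have ih₂ := LDE.fsum_le_cpx E₂ h.2.1
    have p₁ := LDE.tree_label_pos E₁ h.1
    have p₂ := LDE.tree_label_pos E₂ h.2.1
    rw [LDE.tree, LDE.cpx]
    rcases hE₁ : E₁.tree with ⟨l₁, ch₁⟩
    rcases hE₂ : E₂.tree with ⟨l₂, ch₂⟩
    simp only [hE₁, hE₂, LDT.label, LDT.children] at ih₁ ih₂ p₁ p₂ ⊢
    rw [LDT.fsum, LDT.fsumAux_append]
    rw [LDT.fsum] at ih₁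
    rw [LDT.fsum] at ih₂
    have := LDT.base_mul_le p₁ p₂ ch₁ ch₂
    omega
mutual
def LDT.nvT : LDT → ℕ
  | .node _ cs => LDT.nvL cs

def LDT.nvL : List (ℕ × LDT) → ℕ
  | [] => 0
  | c :: cs => LDT.nvT c.2 + 1 + LDT.nvL cs
end

mutual
def LDT.buildT : LDT → ℕ → LDE
  | .node n [], _ => .const n
  | .node n (c :: cs'), k =>
      if n = 1 then LDT.buildL (c :: cs') k
      else .mul (.const n) (LDT.buildL (c :: cs') k)

def LDT.buildL : List (ℕ × LDT) → ℕ → LDE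
  | [], _ => .const 1
  | [c], k => .step (LDT.buildT c.2 k) (k + LDT.nvT c.2) c.1
  | c :: c' :: cs, k =>
      .mul (.step (LDT.buildT c.2 k) (k + LDT.nvT c.2) c.1)
           (LDT.buildL (c' :: cs) (k + LDT.nvT c.2 + 1))
end

mutual
theorem LDT.vars_buildT : ∀ (t : LDT) (k x : ℕ),
    x ∈ (LDT.buildT t k).vars → k ≤ x ∧ x < k + LDT.nvT t
  | .node n [], k, x => by
    intro hx
    simp only [LDT.buildT, LDE.vars] at hx
    simp at hx
  | .node n (c :: cs'), k, x => by
    intro hx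
    simp only [LDT.buildT] at hx
    have key : x ∈ (LDT.buildL (c :: cs') k).vars := by
      by_cases hn : n = 1
      · simpa [hn] using hx
      · simp only [hn, if_false, LDE.vars] at hx
        simpa using hx
    have := LDT.vars_buildL (c :: cs') k x key
    rw [LDT.nvT]
    omega

theorem LDT.vars_buildL : ∀ (cs : List (ℕ × LDT)) (k x : ℕ),
    x ∈ (LDT.buildL cs k).vars → k ≤ x ∧ x < k + LDT.nvL cs
  | [], k, x => by
    intro hx
    simp only [LDT.buildL, LDE.vars] at hx
    simp at hx
  | [c], k, x => by
    intro hx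
    simp only [LDT.buildL, LDE.vars, Finset.mem_insert] at hx
    rw [LDT.nvL, LDT.nvL]
    rcases hx with rfl | hx
    · omega
    · have := LDT.vars_buildT c.2 k x hx
      omega
  | c :: c' :: cs, k, x => by
    intro hx
    simp only [LDT.buildL, LDE.vars, Finset.mem_union, Finset.mem_insert] at hx
    rw [LDT.nvL]
    rcases hx with (rfl | hx) | hx
    · omega
    · have := LDT.vars_buildT c.2 k x hx
      omega
    · have := LDT.vars_buildL (c' :: cs) (k + LDT.nvT c.2 + 1) x hx
      omega
end

mutual
theorem LDT.wf_buildT : ∀ t : LDT, t.Pos → ∀ k, (LDT.buildT t k).WF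
  | .node n [], hpos, k => by
    rw [LDT.Pos] at hpos
    simp only [LDT.buildT]
    exact hpos.1
  | .node n (c :: cs'), hpos, k => by
    rw [LDT.Pos] at hpos
    simp only [LDT.buildT]
    have hL := LDT.wf_buildL (c :: cs') hpos.2 k
    by_cases hn : n = 1
    · simpa [hn] using hL
    · simp only [hn, if_false]
      exact ⟨hpos.1, hL, by simp [LDE.vars]⟩

theorem LDT.wf_buildL : ∀ cs : List (ℕ × LDT), LDT.PosAux cs → ∀ k,
    (LDT.buildL cs k).WF
  | [], _, k => by
    simp only [LDT.buildL]
    exact one_pos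
  | [c], h, k => by
    rw [LDT.PosAux] at h
    simp only [LDT.buildL]
    refine ⟨LDT.wf_buildT c.2 h.2.1 k, fun hx => ?_, h.1⟩
    have := LDT.vars_buildT c.2 k _ hx
    omega
  | c :: c' :: cs, h, k => by
    rw [LDT.PosAux] at h
    simp only [LDT.buildL]
    refine ⟨⟨LDT.wf_buildT c.2 h.2.1 k, fun hx => ?_, h.1⟩,
      LDT.wf_buildL (c' :: cs) h.2.2 (k + LDT.nvT c.2 + 1), ?_⟩
    · have := LDT.vars_buildT c.2 k _ hx
      omega
    · rw [Finset.disjoint_left]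
      intro a ha ha'
      have h2 := LDT.vars_buildL (c' :: cs) (k + LDT.nvT c.2 + 1) a ha'
      simp only [LDE.vars, Finset.mem_insert] at ha
      rcases ha with rfl | ha
      · omega
      · have := LDT.vars_buildT c.2 k a ha
        omega
end

mutual
theorem LDT.tree_buildT : ∀ (t : LDT) (k : ℕ), (LDT.buildT t k).tree = t
  | .node n [], k => by
    simp only [LDT.buildT, LDE.tree]
  | .node n (c :: cs'), k => by
    simp only [LDT.buildT]
    have hL := LDT.tree_buildL (c :: cs') k (by simp)
    by_cases hn : n = 1
    · simp only [hn, if_true]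
      rw [hL]
    · simp only [hn, if_false]
      rw [LDE.tree, hL, LDE.tree]
      simp [LDT.label, LDT.children]

theorem LDT.tree_buildL : ∀ (cs : List (ℕ × LDT)) (k : ℕ), cs ≠ [] →
    (LDT.buildL cs k).tree = LDT.node 1 cs
  | [], _, h => absurd rfl h
  | [c], k, _ => by
    simp only [LDT.buildL]
    rw [LDE.tree, LDT.tree_buildT c.2 k]
  | c :: c' :: cs, k, _ => by
    simp only [LDT.buildL]
    rw [LDE.tree, LDE.tree, LDT.tree_buildT c.2 k,
      LDT.tree_buildL (c' :: cs) (k + LDT.nvT c.2 + 1) (by simp)]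
    simp [LDT.label, LDT.children]
end

mutual
theorem LDT.cpx_buildT : ∀ t : LDT, t.Pos → ∀ k, (LDT.buildT t k).cpx = t.fsum
  | .node n [], hpos, k => by
    simp only [LDT.buildT]
    rw [LDE.cpx, LDT.fsum, LDT.base, LDT.fsumAux]
    simp
  | .node n (c :: cs'), hpos, k => by
    rw [LDT.Pos] at hpos
    simp only [LDT.buildT]
    have hL := LDT.cpx_buildL (c :: cs') hpos.2 (by simp) k
    rw [LDT.fsum, LDT.base]
    by_cases hn : n = 1
    · simp only [hn, if_true]
      rw [hL]
      simp
    · have h1n : 1 < n := by have := hpos.1; omega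
      simp only [hn, if_false]
      rw [LDE.cpx, LDE.cpx, hL]
      simp [h1n]

theorem LDT.cpx_buildL : ∀ cs : List (ℕ × LDT), LDT.PosAux cs → cs ≠ [] → ∀ k,
    (LDT.buildL cs k).cpx = LDT.fsumAux cs
  | [], _, h, _ => absurd rfl h
  | [c], h, _, k => by
    rw [LDT.PosAux] at h
    simp only [LDT.buildL]
    rw [LDE.cpx, LDT.cpx_buildT c.2 h.2.1 k, LDT.fsumAux, LDT.fsumAux]
    omega
  | c :: c' :: cs, h, _, k => by
    rw [LDT.PosAux] at h
    simp only [LDT.buildL]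
    rw [LDE.cpx, LDE.cpx, LDT.cpx_buildT c.2 h.2.1 k,
      LDT.cpx_buildL (c' :: cs) h.2.2 (by simp) (k + LDT.nvT c.2 + 1)]
    simp only [LDT.fsumAux]
    omega
end

mutual
theorem LDT.iso_refl : ∀ t : LDT, t.Iso t
  | .node n cs =>
    LDT.Iso.node n cs cs (Equiv.refl _) (fun _ => rfl) (LDT.iso_refl_aux cs)

theorem LDT.iso_refl_aux : ∀ (cs : List (ℕ × LDT)) (i : Fin cs.length),
    ((cs.get i).2).Iso ((cs.get ((Equiv.refl _) i)).2)
  | c :: cs, ⟨0, _⟩ => LDT.iso_refl c.2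
  | c :: cs, ⟨j + 1, hj⟩ => LDT.iso_refl_aux cs ⟨j, by simpa using hj⟩
end
/-- `‖T‖` equals the sum of the complexities of the edge
labels, of the labels of leaves, and of the labels `> 1` of non-leaf vertices. -/
theorem tree_cpx_formula (t : LDT) (ht : t.Pos) :
    t.cpx = (∑ q ∈ t.edgeFinset, cpx (t.edgeLabelAt q))
      + (∑ p ∈ t.vertFinset.filter (fun p => (t.childrenAt p).length = 0),
          cpx (t.labelAt p))
      + ∑ p ∈ t.vertFinset.filter
            (fun p => (t.childrenAt p).length ≠ 0 ∧ 1 < t.labelAt p),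
          cpx (t.labelAt p) := by
  rw [LDT.rhs_eq_fsum t, LDT.cpx]
  apply le_antisymm
  · exact Nat.sInf_le ⟨LDT.buildT t 0, LDT.wf_buildT t ht 0,
      by rw [LDT.tree_buildT]; exact LDT.iso_refl t, LDT.cpx_buildT t ht 0⟩
  · refine le_csInf ⟨t.fsum, LDT.buildT t 0, LDT.wf_buildT t ht 0,
      by rw [LDT.tree_buildT]; exact LDT.iso_refl t, LDT.cpx_buildT t ht 0⟩ ?_
    rintro c ⟨E, hWF, hIso, rfl⟩
    calc t.fsum = E.tree.fsum := hIso.fsum_eq.symm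
      _ ≤ E.cpx := LDE.fsum_le_cpx E hWF
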